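/- Let H be a real Hilbert space, u ∈ H, W a finite-dimensional subspace of H, and O_1, …, O_N complete (closed) subspaces of H such that each sum W + O_i is complete. For each i set u_i := P_{W + O_i} u, and let k ∈ {1,…,N} be an index such that ‖P_W u − u_k‖ ≥ ‖P_W u − u_i‖ for all i = 1,…,N. Then for every i ∈ {1,…,N} and every ψ ∈ O_i: ‖u − u_k‖ ≤ ‖u − P_{W + span{ψ}} u‖. -/

import Mathlib

open Submodule RealInnerProductSpace

/-- Pythagoras for nested subspaces. -/
lemma pythag_nested {H : Type*} [NormedAddCommGroup H] [InnerProductSpace ℝ H]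
    (u : H) (W V : Submodule ℝ H) [HasOrthogonalProjection W] [HasOrthogonalProjection V]
    (hWV : W ≤ V) :
    ‖u - (orthogonalProjectionOnto W u : H)‖ ^ 2 =
      ‖u - (orthogonalProjectionOnto V u : H)‖ ^ 2 +
      ‖(orthogonalProjectionOnto W u : H) - (orthogonalProjectionOnto V u : H)‖ ^ 2 := by
  have hmem : (orthogonalProjectionOnto V u : H) - (orthogonalProjectionOnto W u : H) ∈ V :=
    V.sub_mem (orthogonalProjectionOnto V u).2 (hWV (orthogonalProjectionOnto W u).2)
  have horth : (inner ℝ (u - (orthogonalProjectionOnto V u : H))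
      ((orthogonalProjectionOnto V u : H) - (orthogonalProjectionOnto W u : H)) : ℝ) = 0 :=
    starProjection_inner_eq_zero u _ hmem
  have hdecomp : u - (orthogonalProjectionOnto W u : H) =
      (u - (orthogonalProjectionOnto V u : H)) +
      ((orthogonalProjectionOnto V u : H) - (orthogonalProjectionOnto W u : H)) := by abel
  rw [hdecomp, norm_add_sq_real, horth,
    norm_sub_rev (orthogonalProjectionOnto V u : H) (orthogonalProjectionOnto W u : H)]
  ring

/-- Best approximation property. -/
lemma proj_minimal {H : Type*} [NormedAddCommGroup H] [InnerProductSpace ℝ H]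
    (u : H) (V : Submodule ℝ H) [HasOrthogonalProjection V] {v : H} (hv : v ∈ V) :
    ‖u - (orthogonalProjectionOnto V u : H)‖ ≤ ‖u - v‖ := by
  have hmem : (orthogonalProjectionOnto V u : H) - v ∈ V :=
    V.sub_mem (orthogonalProjectionOnto V u).2 hv
  have horth : (inner ℝ (u - (orthogonalProjectionOnto V u : H))
      ((orthogonalProjectionOnto V u : H) - v) : ℝ) = 0 :=
    starProjection_inner_eq_zero u _ hmem
  have hdecomp : u - v = (u - (orthogonalProjectionOnto V u : H)) +
      ((orthogonalProjectionOnto V u : H) - v) := by abel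
  have : ‖u - v‖ ^ 2 = ‖u - (orthogonalProjectionOnto V u : H)‖ ^ 2 +
      ‖(orthogonalProjectionOnto V u : H) - v‖ ^ 2 := by
    rw [hdecomp, norm_add_sq_real, horth]; ring
  nlinarith [norm_nonneg ((orthogonalProjectionOnto V u : H) - v),
    norm_nonneg (u - v), norm_nonneg (u - (orthogonalProjectionOnto V u : H))]

/-- Optimality of globally coupled online enrichment (Algorithm 2), inequality
part: the coupled solution `u_k = P_{W + O_k} u` selected to maximize the
solution shift `‖P_W u - u_i‖` has error at most that of any Galerkin solution
in `W + span {ψ}` for any `ψ` in any local space `O i`. -/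
theorem globally_coupled_enrichment_optimal
    {H : Type*} [NormedAddCommGroup H] [InnerProductSpace ℝ H] [CompleteSpace H]
    (u : H) (N : ℕ) (W : Submodule ℝ H) [FiniteDimensional ℝ W]
    (O : Fin N → Submodule ℝ H) [∀ i, CompleteSpace (O i)]
    [∀ i, CompleteSpace ↥(W ⊔ O i)]
    (k : Fin N)
    (hk : ∀ i, ‖(orthogonalProjectionOnto W u : H) - (orthogonalProjectionOnto (W ⊔ O i) u : H)‖ ≤
      ‖(orthogonalProjectionOnto W u : H) - (orthogonalProjectionOnto (W ⊔ O k) u : H)‖) :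
    ∀ i : Fin N, ∀ ψ ∈ O i,
      ‖u - (orthogonalProjectionOnto (W ⊔ O k) u : H)‖ ≤
        ‖u - (orthogonalProjectionOnto (W ⊔ Submodule.span ℝ {ψ}) u : H)‖ := by
  intro i ψ hψ
  haveI : FiniteDimensional ℝ ↥(W ⊔ Submodule.span ℝ {ψ}) := by
    haveI : FiniteDimensional ℝ ↥(Submodule.span ℝ ({ψ} : Set H)) :=
      inferInstance
    exact Submodule.finiteDimensional_sup W _
  set Vψ := W ⊔ Submodule.span ℝ {ψ}
  -- Pythagoras relations
  have hWk : W ≤ W ⊔ O k := le_sup_left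
  have hWψ : W ≤ Vψ := le_sup_left
  have pk := pythag_nested u W (W ⊔ O k) hWk
  have pψ := pythag_nested u W Vψ hWψ
  -- shift comparison: shift(Vψ) ≤ shift(W ⊔ O i) ≤ shift(W ⊔ O k)
  have hsub : Vψ ≤ W ⊔ O i := by
    apply sup_le le_sup_left
    exact le_trans ((Submodule.span_singleton_le_iff_mem ψ (O i)).2 hψ) le_sup_right
  -- error at (W ⊔ O i) ≤ error at Vψ
  have herr : ‖u - (orthogonalProjectionOnto (W ⊔ O i) u : H)‖ ≤
      ‖u - (orthogonalProjectionOnto Vψ u : H)‖ :=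
    proj_minimal u (W ⊔ O i) (hsub (orthogonalProjectionOnto Vψ u).2)
  have pi := pythag_nested u W (W ⊔ O i) le_sup_left
  -- shift at Vψ ≤ shift at W ⊔ O i
  have hshift : ‖(orthogonalProjectionOnto W u : H) - (orthogonalProjectionOnto Vψ u : H)‖ ≤
      ‖(orthogonalProjectionOnto W u : H) - (orthogonalProjectionOnto (W ⊔ O i) u : H)‖ := by
    nlinarith [norm_nonneg ((orthogonalProjectionOnto W u : H) - (orthogonalProjectionOnto Vψ u : H)),
      norm_nonneg ((orthogonalProjectionOnto W u : H) - (orthogonalProjectionOnto (W ⊔ O i) u : H)),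
      norm_nonneg (u - (orthogonalProjectionOnto (W ⊔ O i) u : H)),
      norm_nonneg (u - (orthogonalProjectionOnto Vψ u : H)), herr]
  have hfinal : ‖(orthogonalProjectionOnto W u : H) - (orthogonalProjectionOnto Vψ u : H)‖ ≤
      ‖(orthogonalProjectionOnto W u : H) - (orthogonalProjectionOnto (W ⊔ O k) u : H)‖ :=
    hshift.trans (hk i)
  nlinarith [norm_nonneg (u - (orthogonalProjectionOnto (W ⊔ O k) u : H)),
    norm_nonneg (u - (orthogonalProjectionOnto Vψ u : H)),
    norm_nonneg ((orthogonalProjectionOnto W u : H) - (orthogonalProjectionOnto Vψ u : H)),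
    norm_nonneg ((orthogonalProjectionOnto W u : H) - (orthogonalProjectionOnto (W ⊔ O k) u : H))]
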